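/- Let A be a real m×n matrix, b ∈ ℝ^m and ε ∈ ℝ^m with ε ≥ 0. Then exactly one of the following two statements is true: (1) there exists x ∈ ℝ^n with x ≥ 0 and b − ε ≤ A x ≤ b + ε; (2) there exist y₁, y₂ ∈ ℝ^m with y₁ ≥ 0, y₂ ≥ 0, Aᵀy₁ − Aᵀy₂ ≥ 0 (componentwise), and (b+ε)ᵀy₁ − (b−ε)ᵀy₂ ≤ −1. -/

import Mathlib

open Matrix

open scoped RealInnerProductSpace

set_option linter.unusedSectionVars false
set_option linter.unusedVariables false

section FarkasCore

variable {ι : Type*} [Fintype ι] {E : Type*} [NormedAddCommGroup E]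
  [InnerProductSpace ℝ E] [FiniteDimensional ℝ E]

lemma cone_caratheodory_aux (v : ι → E) (N : ℕ) :
    ∀ c : ι → ℝ, 0 ≤ c → (Finset.univ.filter fun i => c i ≠ 0).card ≤ N →
    ∃ d : ι → ℝ, 0 ≤ d ∧ LinearIndependent ℝ (fun i : {i // d i ≠ 0} => v ↑i) ∧
      ∑ i, d i • v i = ∑ i, c i • v i := by
  classical
  induction N with
  | zero =>
    intro c hc hcard
    have hempty : ∀ i, c i = 0 := by
      intro i
      by_contra hne
      have : i ∈ Finset.univ.filter fun i => c i ≠ 0 := by simp [hne]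
      have := Finset.card_pos.mpr ⟨i, this⟩
      omega
    have hie : IsEmpty {i // c i ≠ 0} := ⟨fun j => j.2 (hempty j.1)⟩
    exact ⟨c, hc, linearIndependent_empty_type, rfl⟩
  | succ N ih =>
    intro c hc hcard
    by_cases hli : LinearIndependent ℝ (fun i : {i // c i ≠ 0} => v ↑i)
    · exact ⟨c, hc, hli, rfl⟩
    obtain ⟨g, hg0, j₀, hj₀⟩ := Fintype.not_linearIndependent_iff.mp hli
    obtain ⟨g, hg0, j₀, hj₀⟩ :
        ∃ g : {i // c i ≠ 0} → ℝ, ∑ i, g i • v ↑i = 0 ∧ ∃ i, 0 < g i := by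
      rcases lt_or_gt_of_ne hj₀ with h | h
      · exact ⟨-g, by simpa using hg0, j₀, by simpa using h⟩
      · exact ⟨g, hg0, j₀, h⟩
    set gg : ι → ℝ := fun i => if h : c i ≠ 0 then g ⟨i, h⟩ else 0 with hggdef
    have hggj₀ : 0 < gg j₀.1 := by simp only [hggdef, dif_pos j₀.2]; exact hj₀
    set P : Finset ι := Finset.univ.filter fun i => 0 < gg i with hPdef
    have hPne : P.Nonempty := ⟨j₀.1, by simp [hPdef, hggj₀]⟩
    obtain ⟨i₀, hi₀P, hi₀min⟩ := Finset.exists_min_image P (fun i => c i / gg i) hPne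
    have hggi₀ : 0 < gg i₀ := by simpa [hPdef] using hi₀P
    set t : ℝ := c i₀ / gg i₀ with htdef
    have ht : 0 ≤ t := div_nonneg (hc i₀) hggi₀.le
    set d : ι → ℝ := fun i => c i - t * gg i with hddef
    have hd0 : 0 ≤ d := by
      intro i
      by_cases hp : 0 < gg i
      · have h1 := hi₀min i (by simp [hPdef, hp])
        have h2 : t * gg i ≤ c i := by rw [← le_div_iff₀ hp]; exact h1
        simpa [hddef] using sub_nonneg.mpr h2
      · push_neg at hp
        have h1 : t * gg i ≤ 0 := mul_nonpos_of_nonneg_of_nonpos ht hp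
        simpa [hddef] using sub_nonneg.mpr (h1.trans (hc i))
    have hdi₀ : d i₀ = 0 := by
      have : t * gg i₀ = c i₀ := div_mul_cancel₀ _ hggi₀.ne'
      simp [hddef, this]
    have hcsupp : ∀ i, c i = 0 → d i = 0 := by
      intro i hci
      simp [hddef, hggdef, hci]
    have hsub : (Finset.univ.filter fun i => d i ≠ 0) ⊂
        (Finset.univ.filter fun i => c i ≠ 0) := by
      constructor
      · intro i hi
        simp only [Finset.mem_filter, Finset.mem_univ, true_and] at hi ⊢
        intro hci; exact hi (hcsupp i hci)
      · intro hsup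
        have hi₀mem : i₀ ∈ Finset.univ.filter fun i => c i ≠ 0 := by
          simp only [Finset.mem_filter, Finset.mem_univ, true_and]
          intro hci
          rw [hggdef] at hggi₀
          simp [hci] at hggi₀
        have := hsup hi₀mem
        simp only [Finset.mem_filter, Finset.mem_univ, true_and] at this
        exact this hdi₀
    have hcard' : (Finset.univ.filter fun i => d i ≠ 0).card ≤ N := by
      have := Finset.card_lt_card hsub
      omega
    have hggsum : ∑ i, gg i • v i = 0 := by
      have e1 : ∑ i ∈ Finset.univ.filter (fun i => c i ≠ 0), gg i • v i
          = ∑ i : {i // c i ≠ 0}, gg ↑i • v ↑i :=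
        Finset.sum_subtype _ (by simp) _
      have e2 : ∑ i : {i // c i ≠ 0}, gg ↑i • v ↑i = 0 := by
        rw [← hg0]
        refine Finset.sum_congr rfl fun i _ => ?_
        have hgi : gg ↑i = g i := by
          rw [hggdef]; simp only [dif_pos i.2, Subtype.coe_eta]
        rw [hgi]
      have e3 : ∑ i ∈ Finset.univ.filter (fun i => c i ≠ 0), gg i • v i
          = ∑ i, gg i • v i := by
        refine Finset.sum_filter_of_ne ?_
        intro i _ hne hci
        exact hne (by simp [hggdef, hci])
      rw [← e3, e1, e2]
    have hsum : ∑ i, d i • v i = ∑ i, c i • v i := by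
      simp only [hddef, sub_smul, mul_smul, Finset.sum_sub_distrib, ← Finset.smul_sum, hggsum,
        smul_zero, sub_zero]
    obtain ⟨d', h1, h2, h3⟩ := ih d hd0 hcard'
    exact ⟨d', h1, h2, h3.trans hsum⟩

lemma isClosed_coneSet (v : ι → E) :
    IsClosed {x : E | ∃ c : ι → ℝ, 0 ≤ c ∧ ∑ i, c i • v i = x} := by
  classical
  -- linear map from coefficients on a finset
  let L : ∀ s : Finset ι, ((↥s → ℝ) →ₗ[ℝ] E) := fun s =>
    { toFun := fun c => ∑ i, c i • v ↑i
      map_add' := fun c d => by simp [add_smul, Finset.sum_add_distrib]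
      map_smul' := fun t c => by simp [smul_smul, Finset.smul_sum] }
  have key : {x : E | ∃ c : ι → ℝ, 0 ≤ c ∧ ∑ i, c i • v i = x} =
      ⋃ (s : Finset ι) (_ : LinearIndependent ℝ (fun i : ↥s => v ↑i)),
        (L s) '' {c : ↥s → ℝ | 0 ≤ c} := by
    ext x
    constructor
    · rintro ⟨c, hc, rfl⟩
      obtain ⟨d, hd0, hdli, hdsum⟩ := cone_caratheodory_aux v
        (Finset.univ.filter fun i => c i ≠ 0).card c hc le_rfl
      set s : Finset ι := Finset.univ.filter fun i => d i ≠ 0 with hs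
      have hli : LinearIndependent ℝ (fun i : ↥s => v ↑i) :=
        (linearIndependent_equiv'
          (Equiv.subtypeEquivRight (q := fun i => i ∈ s) (fun i => by simp [hs]))
          (f := fun i : ↥s => v ↑i) (g := fun i : {i // d i ≠ 0} => v ↑i)
          (funext fun i => congrArg v (by simp [Equiv.subtypeEquivRight]; rfl))).mp hdli
      refine Set.mem_iUnion.mpr ⟨s, Set.mem_iUnion.mpr ⟨hli, ?_⟩⟩
      refine ⟨fun i => d ↑i, fun i => hd0 _, ?_⟩
      show ∑ i : ↥s, d ↑i • v ↑i = ∑ i, c i • v i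
      rw [← Finset.sum_subtype s (fun _ => Iff.rfl) (fun i => d i • v i), ← hdsum, hs]
      exact Finset.sum_filter_of_ne fun i _ hne hdi => hne (by simp [hdi])
    · intro hx
      obtain ⟨s, hmem⟩ := Set.mem_iUnion.mp hx
      obtain ⟨hli, c, hc, rfl⟩ := Set.mem_iUnion.mp hmem
      refine ⟨fun i => if h : i ∈ s then c ⟨i, h⟩ else 0, ?_, ?_⟩
      · intro i
        by_cases h : i ∈ s
        · simpa [dif_pos h] using hc ⟨i, h⟩
        · simp [dif_neg h]
      · show ∑ i, (if h : i ∈ s then c ⟨i, h⟩ else 0) • v i = ∑ i : ↥s, c i • v ↑i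
        rw [← Finset.sum_subset (Finset.subset_univ s)
            (fun i _ hi => by simp [dif_neg hi]),
          Finset.sum_subtype (p := fun i => i ∈ s) s (fun _ => Iff.rfl)
            (fun i => (if h : i ∈ s then c ⟨i, h⟩ else 0) • v i)]
        exact Finset.sum_congr rfl fun i _ => by simp
  rw [key]
  refine isClosed_iUnion_of_finite fun s => isClosed_iUnion_of_finite fun hli => ?_
  have hinj : LinearMap.ker (L s) = ⊥ := by
    rw [LinearMap.ker_eq_bot']
    intro c hc
    funext i
    exact Fintype.linearIndependent_iff.mp hli c hc i
  have horth : IsClosed {c : ↥s → ℝ | 0 ≤ c} := by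
    have : {c : ↥s → ℝ | 0 ≤ c} = ⋂ i, (fun c : ↥s → ℝ => c i) ⁻¹' Set.Ici 0 := by
      ext c; simp [Pi.le_def, Set.mem_iInter]
    rw [this]
    exact isClosed_iInter fun i => isClosed_Ici.preimage (continuous_apply i)
  exact ((L s).isClosedEmbedding_of_injective hinj).isClosedMap _ horth


lemma farkas_core (v : ι → E) (b : E) :
    (∃ c : ι → ℝ, 0 ≤ c ∧ ∑ i, c i • v i = b) ∨
      ∃ y : E, (∀ i, 0 ≤ ⟪v i, y⟫) ∧ ⟪y, b⟫ < 0 := by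
  classical
  by_cases hb : ∃ c : ι → ℝ, 0 ≤ c ∧ ∑ i, c i • v i = b
  · exact Or.inl hb
  right
  let K : ConvexCone ℝ E :=
    { carrier := {x : E | ∃ c : ι → ℝ, 0 ≤ c ∧ ∑ i, c i • v i = x}
      smul_mem' := by
        rintro t ht x ⟨c, hc, rfl⟩
        exact ⟨fun i => t * c i, fun i => mul_nonneg ht.le (hc i),
          by simp [mul_smul, Finset.smul_sum]⟩
      add_mem' := by
        rintro x ⟨c, hc, rfl⟩ y ⟨c', hc', rfl⟩
        exact ⟨c + c', fun i => add_nonneg (hc i) (hc' i),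
          by simp [add_smul, Finset.sum_add_distrib]⟩ }
  have hne : (K : Set E).Nonempty := ⟨0, ⟨0, le_rfl, by simp⟩⟩
  have hcl : IsClosed (K : Set E) := isClosed_coneSet v
  have hbK : b ∉ K := hb
  obtain ⟨y, hy1, hy2⟩ :=
    ProperCone.hyperplane_separation'
      (⟨K.toPointedCone (.of_nonempty_of_isClosed hne hcl), hcl⟩ : ProperCone ℝ E) hbK
  refine ⟨y, fun i => ?_, by rwa [real_inner_comm] at hy2⟩
  refine hy1 (v i) ⟨fun j => if j = i then 1 else 0, ?_, ?_⟩
  · intro j; dsimp; positivity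
  · simp [ite_smul]

end FarkasCore

noncomputable def toEuc {κ : Type*} : (κ → ℝ) ≃ₗ[ℝ] EuclideanSpace ℝ κ :=
  (WithLp.linearEquiv 2 ℝ (κ → ℝ)).symm

lemma toEuc_apply {κ : Type*} (f : κ → ℝ) (k : κ) : (toEuc f : EuclideanSpace ℝ κ) k = f k := rfl

lemma inner_toEuc {κ : Type*} [Fintype κ] (f : κ → ℝ) (y : EuclideanSpace ℝ κ) :
    ⟪(toEuc f : EuclideanSpace ℝ κ), y⟫ = ∑ k, f k * y k := by
  simp [PiLp.inner_apply, RCLike.inner_apply, toEuc_apply]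
  exact Finset.sum_congr rfl fun _ _ => mul_comm _ _

lemma inner_toEuc' {κ : Type*} [Fintype κ] (f : κ → ℝ) (y : EuclideanSpace ℝ κ) :
    ⟪y, (toEuc f : EuclideanSpace ℝ κ)⟫ = ∑ k, y k * f k := by
  simp [PiLp.inner_apply, RCLike.inner_apply, toEuc_apply, mul_comm]

/-- Exactly one of: (1) there exists `x ≥ 0` with `b - ε ≤ A x ≤ b + ε`;
(2) there exist `y₁, y₂ ≥ 0` with `Aᵀ y₁ - Aᵀ y₂ ≥ 0` and
`(b+ε)ᵀ y₁ - (b-ε)ᵀ y₂ ≤ -1`. -/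
theorem art3_farkas_alternative (m n : ℕ) (A : Matrix (Fin m) (Fin n) ℝ)
    (b : Fin m → ℝ) (ε : Fin m → ℝ) (hε : 0 ≤ ε) :
    Xor' (∃ x : Fin n → ℝ, 0 ≤ x ∧ b - ε ≤ A.mulVec x ∧ A.mulVec x ≤ b + ε)
      (∃ y₁ y₂ : Fin m → ℝ, 0 ≤ y₁ ∧ 0 ≤ y₂ ∧
        0 ≤ Aᵀ.mulVec y₁ - Aᵀ.mulVec y₂ ∧
        (b + ε) ⬝ᵥ y₁ - (b - ε) ⬝ᵥ y₂ ≤ -1) := by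
  classical
  -- mutual exclusivity
  have hexcl : ¬ ((∃ x : Fin n → ℝ, 0 ≤ x ∧ b - ε ≤ A.mulVec x ∧ A.mulVec x ≤ b + ε) ∧
      (∃ y₁ y₂ : Fin m → ℝ, 0 ≤ y₁ ∧ 0 ≤ y₂ ∧
        0 ≤ Aᵀ.mulVec y₁ - Aᵀ.mulVec y₂ ∧
        (b + ε) ⬝ᵥ y₁ - (b - ε) ⬝ᵥ y₂ ≤ -1)) := by
    rintro ⟨⟨x, hx0, hlo, hhi⟩, ⟨y₁, y₂, hy₁, hy₂, hpos, hval⟩⟩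
    have key : (Aᵀ.mulVec y₁ - Aᵀ.mulVec y₂) ⬝ᵥ x
        = y₁ ⬝ᵥ A.mulVec x - y₂ ⬝ᵥ A.mulVec x := by
      rw [sub_dotProduct, Matrix.dotProduct_mulVec y₁, Matrix.dotProduct_mulVec y₂,
        ← Matrix.vecMul_transpose, ← Matrix.vecMul_transpose]
      rfl
    have h0 : 0 ≤ (Aᵀ.mulVec y₁ - Aᵀ.mulVec y₂) ⬝ᵥ x :=
      Finset.sum_nonneg fun i _ => mul_nonneg (hpos i) (hx0 i)
    have h1 : y₁ ⬝ᵥ A.mulVec x ≤ y₁ ⬝ᵥ (b + ε) :=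
      Finset.sum_le_sum fun i _ => mul_le_mul_of_nonneg_left (hhi i) (hy₁ i)
    have h2 : y₂ ⬝ᵥ (b - ε) ≤ y₂ ⬝ᵥ A.mulVec x :=
      Finset.sum_le_sum fun i _ => mul_le_mul_of_nonneg_left (hlo i) (hy₂ i)
    have e1 : y₁ ⬝ᵥ (b + ε) = (b + ε) ⬝ᵥ y₁ := dotProduct_comm _ _
    have e2 : y₂ ⬝ᵥ (b - ε) = (b - ε) ⬝ᵥ y₂ := dotProduct_comm _ _
    linarith [key ▸ h0]
  -- the disjunction via Farkas
  have hor : (∃ x : Fin n → ℝ, 0 ≤ x ∧ b - ε ≤ A.mulVec x ∧ A.mulVec x ≤ b + ε) ∨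
      (∃ y₁ y₂ : Fin m → ℝ, 0 ≤ y₁ ∧ 0 ≤ y₂ ∧
        0 ≤ Aᵀ.mulVec y₁ - Aᵀ.mulVec y₂ ∧
        (b + ε) ⬝ᵥ y₁ - (b - ε) ⬝ᵥ y₂ ≤ -1) := by
    set F : (Fin n ⊕ (Fin m ⊕ Fin m)) → ((Fin m ⊕ Fin m) → ℝ) := fun p =>
      Sum.elim (fun j => Sum.elim (fun i => A i j) (fun i => A i j))
        (Sum.elim (fun i => fun k => if k = Sum.inl i then (1:ℝ) else 0)
                  (fun i => fun k => if k = Sum.inr i then (-1:ℝ) else 0)) p with hF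
    set G : (Fin m ⊕ Fin m) → ℝ := Sum.elim (fun i => b i + ε i) (fun i => b i - ε i) with hG
    rcases farkas_core (fun p => (toEuc (F p) : EuclideanSpace ℝ (Fin m ⊕ Fin m)))
      (toEuc G) with ⟨c, hc, hsum⟩ | ⟨y, hy, hyb⟩
    · -- feasible case
      left
      have hsum' : ∑ p, c p • F p = G := by
        apply toEuc.injective
        rw [map_sum]
        simpa only [_root_.map_smul] using hsum
      set x : Fin n → ℝ := fun j => c (Sum.inl j) with hx
      have hup : ∀ i, ∑ j, c (Sum.inl j) * A i j + c (Sum.inr (Sum.inl i)) = b i + ε i := by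
        intro i
        have hk := congrFun hsum' (Sum.inl i)
        simp only [Finset.sum_apply, Pi.smul_apply, smul_eq_mul, Fintype.sum_sum_type, hF, hG,
          Sum.elim_inl, Sum.elim_inr, mul_ite, mul_one, mul_zero, mul_neg, Sum.inl.injEq,
          reduceCtorEq, if_false, Finset.sum_ite_eq, Finset.sum_ite_eq', Finset.mem_univ,
          if_true, Finset.sum_const_zero, add_zero, neg_zero] at hk
        exact hk
      have hdn : ∀ i, ∑ j, c (Sum.inl j) * A i j - c (Sum.inr (Sum.inr i)) = b i - ε i := by
        intro i
        have hk := congrFun hsum' (Sum.inr i)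
        simp only [Finset.sum_apply, Pi.smul_apply, smul_eq_mul, Fintype.sum_sum_type, hF, hG,
          Sum.elim_inl, Sum.elim_inr, mul_ite, mul_one, mul_zero, mul_neg, Sum.inr.injEq,
          reduceCtorEq, if_false, Finset.sum_ite_eq, Finset.sum_ite_eq', Finset.mem_univ,
          if_true, Finset.sum_const_zero, add_zero, zero_add, neg_zero, zero_sub, ← sub_eq_add_neg] at hk
        exact hk
      have hmv : ∀ i, A.mulVec x i = ∑ j, c (Sum.inl j) * A i j := by
        intro i
        simp only [Matrix.mulVec, dotProduct, hx]
        exact Finset.sum_congr rfl fun j _ => mul_comm _ _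
      refine ⟨x, fun j => hc (Sum.inl j), fun i => ?_, fun i => ?_⟩
      · simp only [Pi.sub_apply]
        have := hdn i
        have hnn : (0:ℝ) ≤ c (Sum.inr (Sum.inr i)) := hc _
        rw [hmv i]
        linarith
      · simp only [Pi.add_apply]
        have := hup i
        have hnn : (0:ℝ) ≤ c (Sum.inr (Sum.inl i)) := hc _
        rw [hmv i]
        linarith
    · -- infeasible case
      right
      set y₁ : Fin m → ℝ := fun i => y (Sum.inl i) with hy₁def
      set y₂ : Fin m → ℝ := fun i => - y (Sum.inr i) with hy₂def
      have hy₁0 : 0 ≤ y₁ := by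
        intro i
        have := hy (Sum.inr (Sum.inl i))
        rw [inner_toEuc] at this
        simpa only [hF, Sum.elim_inr, Sum.elim_inl, ite_mul, one_mul, zero_mul,
          Fintype.sum_sum_type, Sum.inl.injEq, reduceCtorEq, if_false,
          Finset.sum_ite_eq, Finset.sum_ite_eq', Finset.mem_univ, if_true,
          Finset.sum_const_zero, add_zero, hy₁def, Pi.zero_apply] using this
      have hy₂0 : 0 ≤ y₂ := by
        intro i
        have := hy (Sum.inr (Sum.inr i))
        rw [inner_toEuc] at this
        simp only [hF, Sum.elim_inr, Sum.elim_inl, ite_mul, one_mul, zero_mul, neg_mul,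
          Fintype.sum_sum_type, Sum.inr.injEq, reduceCtorEq, if_false,
          Finset.sum_ite_eq, Finset.sum_ite_eq', Finset.mem_univ, if_true,
          Finset.sum_const_zero, add_zero, zero_add] at this
        simpa [hy₂def] using this
      have hpos : 0 ≤ Aᵀ.mulVec y₁ - Aᵀ.mulVec y₂ := by
        intro j
        have := hy (Sum.inl j)
        rw [inner_toEuc] at this
        simp only [hF, Sum.elim_inl, Fintype.sum_sum_type] at this
        have heq : Aᵀ.mulVec y₁ j - Aᵀ.mulVec y₂ j
            = ∑ i, A i j * y (Sum.inl i) + ∑ i, A i j * y (Sum.inr i) := by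
          simp only [Matrix.mulVec, dotProduct, Matrix.transpose_apply, hy₁def, hy₂def,
            mul_neg, Finset.sum_neg_distrib, sub_neg_eq_add]
        simp only [Pi.sub_apply, Pi.zero_apply, Pi.le_def]
        rw [heq] at *
        exact this
      have hval : (b + ε) ⬝ᵥ y₁ - (b - ε) ⬝ᵥ y₂ < 0 := by
        rw [inner_toEuc'] at hyb
        simp only [hG, Fintype.sum_sum_type, Sum.elim_inl, Sum.elim_inr] at hyb
        simp only [dotProduct, Pi.add_apply, Pi.sub_apply, hy₁def, hy₂def, mul_neg,
          Finset.sum_neg_distrib, sub_neg_eq_add]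
        calc ∑ i, (b i + ε i) * y (Sum.inl i) + ∑ i, (b i - ε i) * y (Sum.inr i)
            = ∑ i, y (Sum.inl i) * (b i + ε i) + ∑ i, y (Sum.inr i) * (b i - ε i) := by
              congr 1 <;> exact Finset.sum_congr rfl fun i _ => mul_comm _ _
          _ < 0 := hyb
      -- rescale
      set S : ℝ := (b + ε) ⬝ᵥ y₁ - (b - ε) ⬝ᵥ y₂ with hS
      set t : ℝ := -1 / S with ht
      have htpos : 0 < t := by
        rw [ht]
        exact div_pos_of_neg_of_neg (by norm_num) hval
      refine ⟨t • y₁, t • y₂, smul_nonneg htpos.le hy₁0, smul_nonneg htpos.le hy₂0, ?_, ?_⟩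
      · rw [Matrix.mulVec_smul, Matrix.mulVec_smul, ← smul_sub]
        exact smul_nonneg htpos.le hpos
      · rw [dotProduct_smul, dotProduct_smul, smul_eq_mul, smul_eq_mul,
          ← mul_sub, ← hS, ht]
        rw [div_mul_cancel₀]
        · exact hval.ne
  rcases hor with h | h
  · exact Or.inl ⟨h, fun h2 => hexcl ⟨h, h2⟩⟩
  · exact Or.inr ⟨h, fun h1 => hexcl ⟨h1, h⟩⟩
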